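/- Let K be a compact metric space and F : K → [0,1] a Baire-1 function with β(F) ≤ n < ω, i.e., K_n(F,δ) = ∅ for all δ > 0. Then F ∈ B_{1/4}(K): for every ε > 0 there exists G ∈ DBSC(K) with ‖F − G‖_∞ ≤ ε and |G|_D ≤ 2n, so F is a uniform limit of DBSC functions with uniformly bounded DBSC norms. -/

import Mathlib

open Filter

/-- The oscillation of `F` restricted to `L` at `x` is at least `δ`. -/
def oscGE {K : Type*} [TopologicalSpace K] (F : K → ℝ) (L : Set K) (x : K) (δ : ℝ) : Prop :=
  ∀ U ∈ nhds x, ∀ η < δ, ∃ y ∈ L ∩ U, ∃ z ∈ L ∩ U, η < F y - F z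

/-- The oscillation derived sets `K_α(F, δ)` (finite stages). -/
def oscDerivedSet {K : Type*} [TopologicalSpace K] (F : K → ℝ) (δ : ℝ) : ℕ → Set K
  | 0 => Set.univ
  | n + 1 => {x ∈ oscDerivedSet F δ n | oscGE F (oscDerivedSet F δ n) x δ}

section Stmt9Aux

open Metric

variable {K : Type*} [MetricSpace K]

lemma oscDerivedSet_anti (F : K → ℝ) (δ : ℝ) : Antitone (oscDerivedSet F δ) :=
  antitone_nat_of_succ_le fun _ _ hx => hx.1

lemma oscDerivedSet_isClosed (F : K → ℝ) (δ : ℝ) :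
    ∀ n, IsClosed (oscDerivedSet F δ n)
  | 0 => isClosed_univ
  | (n+1) => by
    have ih := oscDerivedSet_isClosed F δ n
    rw [← isOpen_compl_iff, isOpen_iff_forall_mem_open]
    intro x hx
    by_cases hxS : x ∈ oscDerivedSet F δ n
    · have hno : ¬ oscGE F (oscDerivedSet F δ n) x δ := fun h => hx ⟨hxS, h⟩
      unfold oscGE at hno
      push_neg at hno
      obtain ⟨U, hU, η, hη, h⟩ := hno
      obtain ⟨V, hVU, hVo, hxV⟩ := _root_.mem_nhds_iff.1 hU
      refine ⟨V, ?_, hVo, hxV⟩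
      intro x' hx'
      simp only [Set.mem_compl_iff]
      rintro ⟨hx'S, hosc⟩
      obtain ⟨y, hy, z, hz, hyz⟩ := hosc V (hVo.mem_nhds hx') η hη
      exact absurd hyz (not_lt.2 (h y ⟨hy.1, hVU hy.2⟩ z ⟨hz.1, hVU hz.2⟩))
    · exact ⟨(oscDerivedSet F δ n)ᶜ, fun x' hx' hmem => hx' hmem.1, ih.isOpen_compl, hxS⟩

/-- Continuous approximants to the relative upper envelope of `f` over `L`. -/
noncomputable def oscApp (f : K → ℝ) (L : Set K) (m : ℕ) (x : K) : ℝ :=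
  max 0 (⨆ y : L, (f y - m * dist x y))

variable {f : K → ℝ} {L : Set K} {m : ℕ} {x : K}

lemma oscApp_bdd (hf1 : ∀ y, f y ≤ 1) (L : Set K) (m : ℕ) (x : K) :
    BddAbove (Set.range fun y : L => f y - m * dist x y) := by
  refine ⟨1, ?_⟩
  rintro _ ⟨y, rfl⟩
  dsimp only
  have h1 := hf1 (y : K)
  have h2 : (0:ℝ) ≤ (m:ℝ) * dist x y := by positivity
  linarith

lemma oscApp_nonneg : 0 ≤ oscApp f L m x := le_max_left _ _

lemma oscApp_le_one (hf1 : ∀ y, f y ≤ 1) : oscApp f L m x ≤ 1 := by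
  refine max_le zero_le_one (Real.iSup_le (fun y => ?_) zero_le_one)
  have h1 := hf1 (y : K)
  have h2 : (0:ℝ) ≤ (m:ℝ) * dist x y := by positivity
  linarith

lemma le_oscApp (hf1 : ∀ y, f y ≤ 1) {y : K} (hy : y ∈ L) :
    f y - m * dist x y ≤ oscApp f L m x :=
  le_trans (le_ciSup (oscApp_bdd hf1 L m x) (⟨y, hy⟩ : L)) (le_max_right _ _)

lemma le_oscApp_self (hf1 : ∀ y, f y ≤ 1) (hx : x ∈ L) : f x ≤ oscApp f L m x := by
  have := le_oscApp (m := m) (x := x) hf1 hx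
  simpa using this

lemma oscApp_antitone (hf1 : ∀ y, f y ≤ 1) (x : K) :
    Antitone fun m => oscApp f L m x := by
  refine antitone_nat_of_succ_le fun m => ?_
  refine max_le oscApp_nonneg (Real.iSup_le (fun y => ?_) oscApp_nonneg)
  refine le_trans ?_ (le_oscApp hf1 y.2)
  have h2 : (0:ℝ) ≤ dist x y := dist_nonneg
  push_cast
  linarith

lemma oscApp_continuous (hf1 : ∀ y, f y ≤ 1) (L : Set K) (m : ℕ) :
    Continuous fun x => oscApp f L m x := by
  have key : ∀ x x' : K, oscApp f L m x ≤ oscApp f L m x' + m * dist x x' := by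
    intro x x'
    have h0 : (0:ℝ) ≤ oscApp f L m x' + m * dist x x' := by
      have := oscApp_nonneg (f := f) (L := L) (m := m) (x := x')
      positivity
    refine max_le h0 (Real.iSup_le (fun y => ?_) h0)
    have h1 : f y - m * dist x' y ≤ oscApp f L m x' := le_oscApp hf1 y.2
    have h2 : dist x' (y : K) ≤ dist x' x + dist x (y : K) := dist_triangle _ _ _
    have h3 : (0:ℝ) ≤ (m:ℝ) := by positivity
    have h4 : dist x' x = dist x x' := dist_comm _ _
    nlinarith
  refine (LipschitzWith.of_dist_le_mul (K := (m : NNReal)) fun x y => ?_).continuous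
  rw [Real.dist_eq, abs_sub_le_iff]
  simp only [NNReal.coe_natCast]
  constructor
  · have := key x y
    push_cast at this ⊢
    linarith
  · have := key y x
    rw [dist_comm x y]
    push_cast at this ⊢
    linarith

lemma oscApp_exists_zero (hf1 : ∀ y, f y ≤ 1) (hL : IsClosed L) (hx : x ∉ L) :
    ∃ m, oscApp f L m x = 0 := by
  rcases L.eq_empty_or_nonempty with h | h
  · refine ⟨0, ?_⟩
    subst h
    simp [oscApp, Real.iSup_of_isEmpty]
  · have hρ : 0 < infDist x L := (hL.notMem_iff_infDist_pos h).1 hx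
    obtain ⟨m, hm⟩ := exists_nat_ge (1 / infDist x L)
    refine ⟨m, ?_⟩
    have hsup : (⨆ y : L, (f y - m * dist x y)) ≤ 0 := by
      refine Real.iSup_le (fun y => ?_) le_rfl
      have h1 : infDist x L ≤ dist x y := infDist_le_dist_of_mem y.2
      have h2 : 1 ≤ (m:ℝ) * infDist x L := by
        rw [div_le_iff₀ hρ] at hm
        linarith
      have h3 := hf1 (y : K)
      have h4 : (m:ℝ) * infDist x L ≤ (m:ℝ) * dist x y := by
        have : (0:ℝ) ≤ (m:ℝ) := by positivity
        nlinarith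
      linarith
    simpa [oscApp] using max_eq_left hsup

lemma oscApp_le_of_local (hf1 : ∀ y, f y ≤ 1) (hf0 : 0 ≤ f x) {U : Set K}
    (hU : U ∈ nhds x) {η : ℝ} (hη : 0 ≤ η)
    (hloc : ∀ y ∈ L, y ∈ U → f y ≤ f x + η) : ∃ m, oscApp f L m x ≤ f x + η := by
  obtain ⟨ρ, hρ, hball⟩ := Metric.mem_nhds_iff.1 hU
  obtain ⟨m, hm⟩ := exists_nat_ge (1 / ρ)
  have hfη : (0:ℝ) ≤ f x + η := by linarith
  refine ⟨m, max_le hfη (Real.iSup_le (fun y => ?_) hfη)⟩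
  by_cases hd : dist x (y : K) < ρ
  · have hyU : (y : K) ∈ U := hball (by rwa [Metric.mem_ball, dist_comm])
    have := hloc y y.2 hyU
    have h2 : (0:ℝ) ≤ (m:ℝ) * dist x y := by positivity
    linarith
  · push_neg at hd
    have h2 : 1 ≤ (m:ℝ) * ρ := by
      rw [div_le_iff₀ hρ] at hm
      linarith
    have h3 := hf1 (y : K)
    have h4 : (m:ℝ) * ρ ≤ (m:ℝ) * dist x y := by
      have : (0:ℝ) ≤ (m:ℝ) := by positivity
      nlinarith
    linarith

end Stmt9Aux

/-- Let `F : K → [0,1]` be Baire-1 with `K_n(F,δ) = ∅` for all `δ > 0`.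
Then for every `ε > 0` there is `G` with `‖F − G‖_∞ ≤ ε` and `|G|_D ≤ 2n`;
i.e. `F ∈ B_{1/4}(K)`. -/
theorem stmt9 {K : Type*} [MetricSpace K] [CompactSpace K] (F : K → ℝ)
    (hrange : ∀ k, F k ∈ Set.Icc (0 : ℝ) 1)
    (hB1 : ∃ f : ℕ → K → ℝ, (∀ m, Continuous (f m)) ∧
      ∀ k, Tendsto (fun m => f m k) atTop (nhds (F k)))
    (n : ℕ) (hβ : ∀ δ > (0 : ℝ), oscDerivedSet F δ n = ∅) :
    ∀ ε > (0 : ℝ), ∃ G : K → ℝ, (∀ k, |F k - G k| ≤ ε) ∧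
      ∃ g : ℕ → K → ℝ, (∀ m, Continuous (g m)) ∧ g 0 = 0 ∧
        (∀ k, Tendsto (fun m => g m k) atTop (nhds (G k))) ∧
        ∀ (k : K) (N : ℕ), ∑ i ∈ Finset.range N, |g (i+1) k - g i k| ≤ 2 * n := by
  intro ε hε
  classical
  have hF1 : ∀ y, F y ≤ 1 := fun y => (hrange y).2
  have hF0 : ∀ y, 0 ≤ F y := fun y => (hrange y).1
  have hone : ∀ y : K, (fun _ : K => (1:ℝ)) y ≤ 1 := fun _ => le_rfl
  set L : ℕ → Set K := oscDerivedSet F ε with hLdef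
  have hLn : L n = ∅ := hβ ε hε
  have hLc : ∀ j, IsClosed (L j) := fun j => oscDerivedSet_isClosed F ε j
  have hLanti : ∀ {i j : ℕ}, i ≤ j → L j ⊆ L i := fun h => oscDerivedSet_anti F ε h
  set A : ℕ → ℕ → K → ℝ := fun j m x => oscApp F (L j) m x with hAdef
  set C : ℕ → ℕ → K → ℝ := fun j m x => oscApp (fun _ : K => (1:ℝ)) (L (j+1)) m x with hCdef
  set W : ℕ → ℕ → K → ℝ := fun j m x => min (A j m x) (C j m x) with hWdef
  set u : ℕ → K → ℝ := fun j x => ⨅ m, A j m x with hudef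
  set w : ℕ → K → ℝ := fun j x => ⨅ m, W j m x with hwdef
  -- basic facts
  have hA0 : ∀ j m x, 0 ≤ A j m x := fun j m x => oscApp_nonneg
  have hA1 : ∀ j m x, A j m x ≤ 1 := fun j m x => oscApp_le_one hF1
  have hC0 : ∀ j m x, 0 ≤ C j m x := fun j m x => oscApp_nonneg
  have hW0 : ∀ j m x, 0 ≤ W j m x := fun j m x => le_min (hA0 j m x) (hC0 j m x)
  have hWA : ∀ j m x, W j m x ≤ A j m x := fun j m x => min_le_left _ _
  have hAanti : ∀ j x, Antitone fun m => A j m x := fun j x => oscApp_antitone hF1 x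
  have hCanti : ∀ j x, Antitone fun m => C j m x := fun j x => oscApp_antitone hone x
  have hWanti : ∀ j x, Antitone fun m => W j m x :=
    fun j x _ _ h => min_le_min (hAanti j x h) (hCanti j x h)
  have hAbdd : ∀ j x, BddBelow (Set.range fun m => A j m x) := by
    intro j x
    refine ⟨0, ?_⟩
    rintro _ ⟨m, rfl⟩
    exact hA0 j m x
  have hWbdd : ∀ j x, BddBelow (Set.range fun m => W j m x) := by
    intro j x
    refine ⟨0, ?_⟩
    rintro _ ⟨m, rfl⟩
    exact hW0 j m x
  have huA : ∀ j m x, u j x ≤ A j m x := fun j m x => ciInf_le (hAbdd j x) m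
  have hu0 : ∀ j x, 0 ≤ u j x := fun j x => le_ciInf fun m => hA0 j m x
  have hw0 : ∀ j x, 0 ≤ w j x := fun j x => le_ciInf fun m => hW0 j m x
  have hwu : ∀ j x, w j x ≤ u j x := fun j x => ciInf_mono (hWbdd j x) fun m => hWA j m x
  have hAt : ∀ j x, Tendsto (fun m => A j m x) atTop (nhds (u j x)) :=
    fun j x => tendsto_atTop_ciInf (hAanti j x) (hAbdd j x)
  have hWt : ∀ j x, Tendsto (fun m => W j m x) atTop (nhds (w j x)) :=
    fun j x => tendsto_atTop_ciInf (hWanti j x) (hWbdd j x)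
  -- vanishing lemmas
  have hu_zero : ∀ j x, x ∉ L j → u j x = 0 := by
    intro j x hx
    obtain ⟨m, hm⟩ := oscApp_exists_zero hF1 (hLc j) hx
    exact le_antisymm ((huA j m x).trans hm.le) (hu0 j x)
  have hw_zero : ∀ j x, x ∉ L (j+1) → w j x = 0 := by
    intro j x hx
    obtain ⟨m, hm⟩ := oscApp_exists_zero hone (hLc (j+1)) hx
    have hmin : W j m x ≤ 0 := (min_le_right _ _).trans hm.le
    exact le_antisymm ((ciInf_le (hWbdd j x) m).trans hmin) (hw0 j x)
  have hw_eq : ∀ j x, x ∈ L (j+1) → w j x = u j x := by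
    intro j x hx
    have hCx : ∀ m, C j m x = 1 := fun m =>
      le_antisymm (oscApp_le_one hone) (by simpa using le_oscApp_self (m := m) hone hx)
    have hWx : ∀ m, W j m x = A j m x := by
      intro m
      show min (A j m x) (C j m x) = A j m x
      rw [hCx m]
      exact min_eq_left (hA1 j m x)
    exact iInf_congr hWx
  -- the uniform estimate
  have hGbound : ∀ x : K, |F x - ∑ j ∈ Finset.range n, (u j x - w j x)| ≤ ε := by
    intro x
    have hex : ∃ j, x ∉ L (j+1) := by
      by_cases hn : n = 0
      · exfalso
        have h0 : x ∈ L n := by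
          rw [hn]
          exact Set.mem_univ x
        rw [hLn] at h0
        exact h0
      · have h1 : 1 ≤ n := Nat.one_le_iff_ne_zero.2 hn
        refine ⟨n - 1, ?_⟩
        rw [Nat.sub_add_cancel h1, hLn]
        exact Set.notMem_empty x
    obtain ⟨r, hr, hrmin⟩ : ∃ r, x ∉ L (r+1) ∧ ∀ j < r, x ∈ L (j+1) :=
      ⟨Nat.find hex, Nat.find_spec hex, fun j hj => not_not.1 (Nat.find_min hex hj)⟩
    have hxr : x ∈ L r := by
      cases r with
      | zero => exact Set.mem_univ x
      | succ j => exact hrmin j (Nat.lt_succ_self j)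
    have hrn : r < n := by
      by_contra hcon
      push_neg at hcon
      have hmem : x ∈ L n := hLanti hcon hxr
      rw [hLn] at hmem
      exact hmem
    have hsum : ∑ j ∈ Finset.range n, (u j x - w j x) = u r x := by
      rw [Finset.sum_eq_single_of_mem r (Finset.mem_range.2 hrn) ?_]
      · rw [hw_zero r x hr, sub_zero]
      · intro j _ hne
        rcases lt_or_gt_of_ne hne with h | h
        · rw [hw_eq j x (hrmin j h), sub_self]
        · have hxj : x ∉ L j := fun hm => hr (hLanti h hm)
          have hwj : w j x = 0 :=
            le_antisymm ((hwu j x).trans (hu_zero j x hxj).le) (hw0 j x)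
          rw [hu_zero j x hxj, hwj, sub_zero]
    rw [hsum]
    have hlow : F x ≤ u r x := le_ciInf fun m => le_oscApp_self hF1 hxr
    have hno : ¬ oscGE F (L r) x ε := by
      intro hosc
      exact hr (Set.mem_sep hxr hosc)
    unfold oscGE at hno
    push_neg at hno
    obtain ⟨U, hU, η, hη, h⟩ := hno
    have hloc : ∀ y ∈ L r, y ∈ U → F y ≤ F x + max η 0 := by
      intro y hy hyU
      have hxy := h y ⟨hy, hyU⟩ x ⟨hxr, mem_of_mem_nhds hU⟩
      have := le_max_left η 0
      linarith
    have hup : u r x ≤ F x + max η 0 := by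
      obtain ⟨m, hm⟩ := oscApp_le_of_local hF1 (hF0 x) hU (le_max_right η 0) hloc
      exact (huA r m x).trans hm
    have hmε : max η 0 ≤ ε := (max_lt hη hε).le
    rw [abs_sub_le_iff]
    constructor
    · linarith
    · linarith
  -- assemble
  refine ⟨fun x => ∑ j ∈ Finset.range n, (u j x - w j x), hGbound, ?_⟩
  set g : ℕ → K → ℝ := fun m =>
    if m = 0 then (0 : K → ℝ)
    else fun x => ∑ j ∈ Finset.range n, (A j (m-1) x - W j (m-1) x) with hgdef
  have hg0 : g 0 = 0 := by
    rw [hgdef]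
    simp
  have hgs : ∀ i, g (i+1) = fun x => ∑ j ∈ Finset.range n, (A j i x - W j i x) := by
    intro i
    rw [hgdef]
    simp
  refine ⟨g, ?_, hg0, ?_, ?_⟩
  · -- continuity
    intro m
    cases m with
    | zero =>
      rw [hg0]
      exact continuous_const
    | succ i =>
      rw [hgs i]
      refine continuous_finset_sum _ fun j _ => Continuous.sub ?_ ?_
      · exact oscApp_continuous hF1 (L j) i
      · exact (oscApp_continuous hF1 (L j) i).min (oscApp_continuous hone (L (j+1)) i)
  · -- pointwise convergence
    intro k
    have h1 : Tendsto (fun i => ∑ j ∈ Finset.range n, (A j i k - W j i k)) atTop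
        (nhds (∑ j ∈ Finset.range n, (u j k - w j k))) :=
      tendsto_finset_sum _ fun j _ => (hAt j k).sub (hWt j k)
    have h2 := h1.comp (tendsto_sub_atTop_nat 1)
    refine h2.congr' ?_
    filter_upwards [eventually_ge_atTop 1] with m hm
    obtain ⟨i, rfl⟩ : ∃ i, m = i + 1 := ⟨m - 1, (Nat.succ_pred_eq_of_pos hm).symm⟩
    rw [Function.comp_apply, hgs i]
    simp
  · -- variation bound
    intro k N
    have key : ∀ M, ∑ i ∈ Finset.range (M+1), |g (i+1) k - g i k| ≤
        ∑ j ∈ Finset.range n, (2 * A j 0 k - A j M k - W j M k) := by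
      intro M
      induction M with
      | zero =>
        rw [Finset.sum_range_one, hgs 0, hg0]
        simp only [Pi.zero_apply, sub_zero]
        calc |∑ j ∈ Finset.range n, (A j 0 k - W j 0 k)|
            ≤ ∑ j ∈ Finset.range n, |A j 0 k - W j 0 k| := Finset.abs_sum_le_sum_abs _ _
          _ = ∑ j ∈ Finset.range n, (A j 0 k - W j 0 k) :=
              Finset.sum_congr rfl fun j _ => abs_of_nonneg (sub_nonneg.2 (hWA j 0 k))
          _ = ∑ j ∈ Finset.range n, (2 * A j 0 k - A j 0 k - W j 0 k) :=
              Finset.sum_congr rfl fun j _ => by ring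
      | succ M ih =>
        rw [Finset.sum_range_succ]
        have hstep : |g (M+1+1) k - g (M+1) k| ≤
            ∑ j ∈ Finset.range n, ((A j M k - A j (M+1) k) + (W j M k - W j (M+1) k)) := by
          rw [hgs (M+1), hgs M]
          rw [← Finset.sum_sub_distrib]
          refine (Finset.abs_sum_le_sum_abs _ _).trans (Finset.sum_le_sum fun j _ => ?_)
          have ha : A j (M+1) k ≤ A j M k := hAanti j k (Nat.le_succ M)
          have hw' : W j (M+1) k ≤ W j M k := hWanti j k (Nat.le_succ M)
          rw [abs_le]
          constructor
          · linarith
          · linarith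
        calc ∑ i ∈ Finset.range (M+1), |g (i+1) k - g i k| + |g (M+1+1) k - g (M+1) k|
            ≤ (∑ j ∈ Finset.range n, (2 * A j 0 k - A j M k - W j M k)) +
              ∑ j ∈ Finset.range n, ((A j M k - A j (M+1) k) + (W j M k - W j (M+1) k)) :=
              add_le_add ih hstep
          _ = ∑ j ∈ Finset.range n, (2 * A j 0 k - A j (M+1) k - W j (M+1) k) := by
              rw [← Finset.sum_add_distrib]
              exact Finset.sum_congr rfl fun j _ => by ring
    cases N with
    | zero =>
      simp
    | succ M =>
      refine (key M).trans ?_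
      have hterm : ∀ j ∈ Finset.range n, 2 * A j 0 k - A j M k - W j M k ≤ 2 := by
        intro j _
        have h1 := hA1 j 0 k
        have h2 := hA0 j M k
        have h3 := hW0 j M k
        linarith
      calc ∑ j ∈ Finset.range n, (2 * A j 0 k - A j M k - W j M k)
          ≤ ∑ _j ∈ Finset.range n, (2:ℝ) := Finset.sum_le_sum hterm
        _ = 2 * n := by
            rw [Finset.sum_const, Finset.card_range]
            push_cast
            ring
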